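/- Let H be a real inner product space, let D : H → H be a linear map that is symmetric (⟨Dx, y⟩ = ⟨x, Dy⟩ for all x, y ∈ H), and let E ⊆ H be a finite-dimensional subspace with orthogonal complement Eᗮ. Suppose there are real numbers 0 ≤ a < b such that ‖Dw‖ ≤ a‖w‖ for all w ∈ E and ‖Dw‖ ≥ b‖w‖ for all w ∈ Eᗮ. If w ∈ H and λ ∈ ℝ satisfy a² < λ < b² and D(D w) = λ w, then w = 0. In other words, D² has no eigenvalue in the open interval (a², b²). -/

import Mathlib

/-- Eigenvalue gap: if a symmetric linear map `D` on a real inner product space is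
bounded above by `a` on a finite-dimensional subspace `E` and bounded below by `b > a`
on its orthogonal complement, then `D²` has no eigenvalue in the open interval
`(a², b²)`. -/
theorem eigenvalue_gap
    (H : Type*) [NormedAddCommGroup H] [InnerProductSpace ℝ H]
    (D : H →ₗ[ℝ] H)
    (hsym : ∀ x y : H, (inner ℝ (D x) y : ℝ) = (inner ℝ x (D y) : ℝ))
    (E : Submodule ℝ H) [FiniteDimensional ℝ E]
    (a b : ℝ) (ha : 0 ≤ a) (hab : a < b)
    (hupper : ∀ w ∈ E, ‖D w‖ ≤ a * ‖w‖)
    (hlower : ∀ w ∈ Eᗮ, b * ‖w‖ ≤ ‖D w‖)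
    (w : H) (lam : ℝ) (h1 : a ^ 2 < lam) (h2 : lam < b ^ 2)
    (heig : D (D w) = lam • w) : w = 0 := by
  set w1 : H := (E.orthogonalProjection w : H) with hw1def
  set w2 : H := w - w1 with hw2def
  have hw1 : w1 ∈ E := (E.orthogonalProjection w).2
  have hw2 : w2 ∈ Eᗮ := Submodule.sub_starProjection_mem_orthogonal (K := E) w
  have hw : w = w1 + w2 := by rw [hw2def]; abel
  have horth : (inner ℝ w1 w2 : ℝ) = 0 :=
    (Submodule.mem_orthogonal E w2).mp hw2 w1 hw1
  -- key identity from symmetry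
  have e1 : (inner ℝ (D (D w)) (w1 - w2) : ℝ) = ‖D w1‖ ^ 2 - ‖D w2‖ ^ 2 := by
    rw [hsym]
    have hcomm : (inner ℝ (D w1) (D w2) : ℝ) = inner ℝ (D w2) (D w1) := real_inner_comm _ _
    rw [hw, map_sub, map_add]
    simp only [inner_add_left, inner_sub_right, real_inner_self_eq_norm_sq]
    linarith
  have e2 : (inner ℝ (D (D w)) (w1 - w2) : ℝ) = lam * ‖w1‖ ^ 2 - lam * ‖w2‖ ^ 2 := by
    rw [heig, real_inner_smul_left, hw]
    have hcomm : (inner ℝ w1 w2 : ℝ) = inner ℝ w2 w1 := real_inner_comm _ _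
    simp only [inner_add_left, inner_sub_right, real_inner_self_eq_norm_sq]
    rw [horth] at hcomm ⊢
    rw [← hcomm]
    ring
  have key : ‖D w1‖ ^ 2 - ‖D w2‖ ^ 2 = lam * ‖w1‖ ^ 2 - lam * ‖w2‖ ^ 2 := by
    rw [← e1, e2]
  have hub : ‖D w1‖ ^ 2 ≤ a ^ 2 * ‖w1‖ ^ 2 := by
    have := hupper w1 hw1
    nlinarith [norm_nonneg (D w1), norm_nonneg w1]
  have hlb : b ^ 2 * ‖w2‖ ^ 2 ≤ ‖D w2‖ ^ 2 := by
    have := hlower w2 hw2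
    have hb : 0 < b := lt_of_le_of_lt ha hab
    nlinarith [norm_nonneg (D w2), norm_nonneg w2, mul_nonneg hb.le (norm_nonneg w2)]
  have h1' : w1 = 0 := by
    have h : ‖w1‖ ^ 2 = 0 :=
      le_antisymm (by nlinarith [sq_nonneg ‖w1‖, sq_nonneg ‖w2‖]) (sq_nonneg _)
    simpa using (pow_eq_zero_iff two_ne_zero).mp h
  have h2' : w2 = 0 := by
    have h : ‖w2‖ ^ 2 = 0 :=
      le_antisymm (by nlinarith [sq_nonneg ‖w1‖, sq_nonneg ‖w2‖]) (sq_nonneg _)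
    simpa using (pow_eq_zero_iff two_ne_zero).mp h
  rw [hw, h1', h2', add_zero]
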